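/- (Lemma 1.1(i).) Assume K is an infinite field. If every invariant polynomial is constant, i.e. every semi-invariant f ∈ MvPolynomial (Fin m) K of weight 0 equals the constant polynomial MvPolynomial.C (MvPolynomial.coeff 0 f), then there exists λ : Fin r → ℤ such that all the torus weights on 𝕍 are strictly positive against λ: for every i : Fin m, ∑ j, w i j * λ j > 0. -/

import Mathlib

lemma exists_sep {F : Type*} [Field F] [LinearOrder F] [IsStrictOrderedRing F] {α β : Type*} [Fintype α] [Fintype β]
    (l : α → F) (u : β → F) (h : ∀ a b, l a < u b) :
    ∃ z : F, (∀ a, l a < z) ∧ ∀ b, z < u b := by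
  classical
  cases isEmpty_or_nonempty α with
  | inl hα =>
    cases isEmpty_or_nonempty β with
    | inl hβ => exact ⟨0, fun a => (hα.false a).elim, fun b => (hβ.false b).elim⟩
    | inr hβ =>
      refine ⟨(Finset.univ.image u).min' (by simp [Finset.image_nonempty]) - 1,
        fun a => (hα.false a).elim, fun b => ?_⟩
      have := Finset.min'_le (Finset.univ.image u) (u b) (by simp)
      linarith
  | inr hα =>
    cases isEmpty_or_nonempty β with
    | inl hβ =>
      refine ⟨(Finset.univ.image l).max' (by simp [Finset.image_nonempty]) + 1,
        fun a => ?_, fun b => (hβ.false b).elim⟩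
      have := Finset.le_max' (Finset.univ.image l) (l a) (by simp)
      linarith
    | inr hβ =>
      set M := (Finset.univ.image l).max' (by simp [Finset.image_nonempty]) with hM
      set N := (Finset.univ.image u).min' (by simp [Finset.image_nonempty]) with hN
      have hMN : M < N := by
        obtain ⟨a, -, ha⟩ := Finset.mem_image.mp
          ((Finset.univ.image l).max'_mem (by simp [Finset.image_nonempty]))
        obtain ⟨b, -, hb⟩ := Finset.mem_image.mp
          ((Finset.univ.image u).min'_mem (by simp [Finset.image_nonempty]))
        rw [hM, hN, ← ha, ← hb]; exact h a b
      refine ⟨(M + N) / 2, fun a => ?_, fun b => ?_⟩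
      · have := Finset.le_max' (Finset.univ.image l) (l a) (by simp)
        linarith
      · have := Finset.min'_le (Finset.univ.image u) (u b) (by simp)
        linarith

lemma prod_zpow_sum {G : Type*} [CommGroup G] {ι : Type*} (s : Finset ι) (x : G) (f : ι → ℤ) :
    ∏ i ∈ s, x ^ f i = x ^ (∑ i ∈ s, f i) := by
  induction s using Finset.cons_induction with
  | empty => simp
  | cons a s ha ih => simp [Finset.prod_cons, Finset.sum_cons, ih, zpow_add]


lemma rat_scale (q : ℚ) (N : ℕ) (h : q.den ∣ N) :
    ((q.num * ((N / q.den : ℕ) : ℤ) : ℤ) : ℚ) = q * N := by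
  obtain ⟨e, he⟩ := h
  have hd : (0:ℕ) < q.den := q.pos
  subst he
  rw [Nat.mul_div_cancel_left _ hd]
  have hden : ((q.den : ℚ)) ≠ 0 := by exact_mod_cast hd.ne'
  have h1 : (q.num : ℚ) = q * q.den := by
    exact (div_eq_iff hden).mp (Rat.num_div_den q)
  push_cast
  rw [h1]
  ring

lemma gordan {F : Type*} [Field F] [LinearOrder F] [IsStrictOrderedRing F] :
    ∀ (r : ℕ) {ι : Type} [Fintype ι] (v : ι → Fin r → F),
    (∃ lam : Fin r → F, ∀ i, 0 < ∑ j, v i j * lam j) ∨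
    (∃ c : ι → F, (∀ i, 0 ≤ c i) ∧ (∃ i, c i ≠ 0) ∧ ∀ j, ∑ i, c i * v i j = 0) := by
  intro r
  induction r with
  | zero =>
    intro ι _ v
    cases isEmpty_or_nonempty ι with
    | inl h => exact Or.inl ⟨0, fun i => (h.false i).elim⟩
    | inr h =>
      exact Or.inr ⟨fun _ => 1, fun i => zero_le_one, ⟨h.some, one_ne_zero⟩,
        fun j => j.elim0⟩
  | succ r IH =>
    intro ι _ v
    classical
    set b : ι → F := fun i => v i (Fin.last r) with hb
    set a : ι → Fin r → F := fun i j => v i j.castSucc with ha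
    let κ := ({i : ι // b i = 0} ⊕ ({p : ι // 0 < b p} × {n : ι // b n < 0}))
    set u : κ → Fin r → F := fun k => match k with
      | Sum.inl i => a i.1
      | Sum.inr (p, n) => fun j => b p.1 * a n.1 j - b n.1 * a p.1 j with hu
    rcases IH u with ⟨mu, hmu⟩ | ⟨c', hc'0, ⟨k0, hk0⟩, hc'⟩
    · -- build lam via separation
      set s : ι → F := fun i => ∑ j, a i j * mu j with hs
      have hkey : ∀ (p : {p : ι // 0 < b p}) (n : {n : ι // b n < 0}),
          0 < b p.1 * s n.1 - b n.1 * s p.1 := by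
        intro p n
        have h := hmu (Sum.inr (p, n))
        simp only [hu] at h
        calc (0:F) < ∑ j, (b p.1 * a n.1 j - b n.1 * a p.1 j) * mu j := h
          _ = b p.1 * s n.1 - b n.1 * s p.1 := by
              rw [hs, Finset.mul_sum, Finset.mul_sum, ← Finset.sum_sub_distrib]
              exact Finset.sum_congr rfl (fun j _ => by ring)
      have hlu : ∀ (p : {p : ι // 0 < b p}) (n : {n : ι // b n < 0}),
          -s p.1 / b p.1 < -s n.1 / b n.1 := by
        intro p n
        have hpn := mul_neg_of_pos_of_neg p.2 n.2
        have hbp : b p.1 ≠ 0 := ne_of_gt p.2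
        have hbn : b n.1 ≠ 0 := ne_of_lt n.2
        have hid : -s n.1 / b n.1 - (-s p.1 / b p.1)
            = -((b p.1 * s n.1 - b n.1 * s p.1) / (b p.1 * b n.1)) := by
          field_simp
          ring
        have hd : (b p.1 * s n.1 - b n.1 * s p.1) / (b p.1 * b n.1) < 0 :=
          div_neg_of_pos_of_neg (hkey p n) hpn
        linarith [hid, hd]
      obtain ⟨z, hz1, hz2⟩ := exists_sep (α := {p : ι // 0 < b p}) (β := {n : ι // b n < 0})
        (fun p => -s p.1 / b p.1) (fun n => -s n.1 / b n.1) hlu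
      refine Or.inl ⟨Fin.snoc mu z, fun i => ?_⟩
      · 
        have hsum : ∑ j, v i j * (Fin.snoc mu z : Fin (r+1) → F) j
            = s i + b i * z := by
          rw [Fin.sum_univ_castSucc]
          simp [ha, hb, hs]
        rw [hsum]
        rcases lt_trichotomy (b i) 0 with hbi | hbi | hbi
        · have h1 : z < -s i / b i := hz2 ⟨i, hbi⟩
          have h2 : -s i < z * b i := (lt_div_iff_of_neg hbi).mp h1
          nlinarith
        · have h1 := hmu (Sum.inl ⟨i, hbi⟩)
          simp only [hu] at h1
          rw [hbi]
          simpa [hs] using h1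
        · have h1 : -s i / b i < z := hz1 ⟨i, hbi⟩
          have h2 : -s i < z * b i := (div_lt_iff₀ hbi).mp h1
          nlinarith
    · -- lift the relation
      set g : κ → ι → F := fun k i => match k with
        | Sum.inl i0 => if i = i0.1 then 1 else 0
        | Sum.inr (p, n) => (if i = p.1 then -b n.1 else 0) + (if i = n.1 then b p.1 else 0)
        with hg
      have hg0 : ∀ k i, 0 ≤ g k i := by
        rintro (i0 | ⟨p, n⟩) i <;> simp only [hg]
        · positivity
        · have := p.2; have := n.2
          apply add_nonneg <;> split <;> linarith
      refine Or.inr ⟨fun i => ∑ k, c' k * g k i, fun i => Finset.sum_nonneg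
        (fun k _ => mul_nonneg (hc'0 k) (hg0 k i)), ?_, ?_⟩
      · -- nonzero
        have hpos : 0 < c' k0 := lt_of_le_of_ne (hc'0 k0) (Ne.symm hk0)
        have main : ∀ i : ι, 0 < c' k0 * g k0 i → ∃ i, (∑ k, c' k * g k i) ≠ 0 :=
          fun i h => ⟨i, ne_of_gt (Finset.sum_pos'
            (fun k _ => mul_nonneg (hc'0 k) (hg0 k i)) ⟨k0, Finset.mem_univ _, h⟩)⟩
        match k0, hpos with
        | Sum.inl i, hpos => exact main i.1 (by simp [hg, hpos])
        | Sum.inr (p, n), hpos =>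
          apply main p.1
          have h1 : 0 < b p.1 := p.2
          have h2 : b n.1 < 0 := n.2
          have hne : (p.1 : ι) ≠ n.1 := by
            intro h; rw [h] at h1; linarith
          simp [hg, hne]
          nlinarith
      · -- the relation
        intro j
        have hrow1 : ∀ i0 : {i : ι // b i = 0}, ∑ i, g (Sum.inl i0) i * v i j = v i0.1 j := by
          intro i0
          simp [hg, ite_mul, Finset.sum_ite_eq']
        have hrow2 : ∀ (p : {p : ι // 0 < b p}) (n : {n : ι // b n < 0}),
            ∑ i, g (Sum.inr (p, n)) i * v i j = -b n.1 * v p.1 j + b p.1 * v n.1 j := by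
          intro p n
          simp [hg, add_mul, ite_mul, Finset.sum_add_distrib, Finset.sum_ite_eq']
        have step : ∑ i, (∑ k, c' k * g k i) * v i j
            = ∑ k, c' k * (∑ i, g k i * v i j) := by
          simp only [Finset.sum_mul, Finset.mul_sum, mul_assoc]
          exact Finset.sum_comm
        rw [step]
        induction j using Fin.lastCases with
        | last =>
          refine Finset.sum_eq_zero (fun k _ => ?_)
          match k with
          | Sum.inl i0 => rw [hrow1 i0]; exact mul_eq_zero_of_right _ i0.2
          | Sum.inr (p, n) =>
            rw [hrow2 p n]
            simp only [hb]
            ring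
        | cast j0 =>
          calc ∑ k, c' k * (∑ i, g k i * v i j0.castSucc) = ∑ k, c' k * u k j0 := by
                refine Finset.sum_congr rfl (fun k _ => ?_)
                congr 1
                match k with
                | Sum.inl i0 => exact hrow1 i0
                | Sum.inr (p, n) =>
                  rw [hrow2 p n]
                  simp only [hu, ha]
                  ring
            _ = 0 := hc' j0


/-- (Lemma 1.1(i).) Over an infinite field, if every invariant polynomial (semi-invariant
of weight `0` for the diagonal torus action with weight matrix `w`) is constant, then
there exists a one-parameter subgroup `λ` against which all the weights are strictly
positive. -/
theorem exists_positive_one_parameter_subgroup (K : Type*) [Field K] [Infinite K]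
    (m r : ℕ) (hm : 0 < m) (hr : 0 < r) (w : Fin m → (Fin r → ℤ))
    (hinv : ∀ f : MvPolynomial (Fin m) K,
      (∀ (t : Fin r → Kˣ) (x : Fin m → K),
        MvPolynomial.eval (fun i => ((∏ j, (t j) ^ (w i j) : Kˣ) : K) * x i) f
          = ((∏ j, (t j) ^ ((0 : Fin r → ℤ) j) : Kˣ) : K) * MvPolynomial.eval x f) →
      f = MvPolynomial.C (MvPolynomial.coeff 0 f)) :
    ∃ lam : Fin r → ℤ, ∀ i : Fin m, (∑ j, w i j * lam j) > 0 := by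
  classical
  rcases gordan (F := ℚ) r (ι := Fin m) (fun i j => (w i j : ℚ)) with
    ⟨lam', hlam'⟩ | ⟨c, hc0, ⟨i0, hi0⟩, hrel⟩
  · -- scale the rational 1-PS to an integral one
    set N : ℕ := ∏ j, (lam' j).den with hN
    have hNpos : 0 < N := Finset.prod_pos (fun j _ => (lam' j).pos)
    refine ⟨fun j => (lam' j).num * ((N / (lam' j).den : ℕ) : ℤ), fun i => ?_⟩
    have hcast : ∀ j, (((lam' j).num * ((N / (lam' j).den : ℕ) : ℤ) : ℤ) : ℚ) = lam' j * N :=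
      fun j => rat_scale _ _ (Finset.dvd_prod_of_mem _ (Finset.mem_univ j))
    have key : ((∑ j, w i j * ((lam' j).num * ((N / (lam' j).den : ℕ) : ℤ)) : ℤ) : ℚ)
        = (∑ j, (w i j : ℚ) * lam' j) * N := by
      rw [Int.cast_sum, Finset.sum_mul]
      refine Finset.sum_congr rfl fun j _ => ?_
      rw [Int.cast_mul, hcast j]
      ring
    have hpos : (0:ℚ) < ((∑ j, w i j * ((lam' j).num * ((N / (lam' j).den : ℕ) : ℤ)) : ℤ) : ℚ) := by
      rw [key]
      exact mul_pos (hlam' i) (by exact_mod_cast hNpos)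
    exact_mod_cast hpos
  · -- build a nonconstant invariant monomial, contradicting hinv
    exfalso
    set M : ℕ := ∏ i, (c i).den with hM
    have hMpos : 0 < M := Finset.prod_pos (fun i _ => (c i).pos)
    set d : Fin m → ℤ := fun i => (c i).num * ((M / (c i).den : ℕ) : ℤ) with hd
    have hdcast : ∀ i, ((d i : ℤ) : ℚ) = c i * M :=
      fun i => rat_scale _ _ (Finset.dvd_prod_of_mem _ (Finset.mem_univ i))
    have hd0 : ∀ i, 0 ≤ d i := by
      intro i
      have h1 : (0:ℚ) ≤ c i * M := mul_nonneg (hc0 i) (by positivity)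
      rw [← hdcast i] at h1
      exact_mod_cast h1
    set a : Fin m → ℕ := fun i => (d i).toNat with haa
    have hacast : ∀ i, ((a i : ℤ)) = d i := fun i => Int.toNat_of_nonneg (hd0 i)
    have ha0 : a i0 ≠ 0 := by
      have h1 : (0:ℚ) < c i0 * M :=
        mul_pos (lt_of_le_of_ne (hc0 i0) (Ne.symm hi0)) (by exact_mod_cast hMpos)
      rw [← hdcast i0] at h1
      have h2 : 0 < d i0 := by exact_mod_cast h1
      simp only [haa]
      omega
    have hwa : ∀ j, ∑ i, (a i : ℤ) * w i j = 0 := by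
      intro j
      have hcq : ((∑ i, (a i : ℤ) * w i j : ℤ) : ℚ) = (∑ i, c i * (w i j : ℚ)) * M := by
        rw [Int.cast_sum, Finset.sum_mul]
        refine Finset.sum_congr rfl fun i _ => ?_
        rw [Int.cast_mul, hacast i, hdcast i]
        ring
      rw [hrel j, zero_mul] at hcq
      exact_mod_cast hcq
    set exps : (Fin m) →₀ ℕ := Finsupp.equivFunOnFinite.symm a with hexpsdef
    have hexps : ∀ i, exps i = a i := fun i => by simp [hexpsdef]
    have hexpsne : exps ≠ 0 := by
      intro h
      apply ha0
      rw [← hexps i0, h]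
      rfl
    set f : MvPolynomial (Fin m) K := MvPolynomial.monomial exps (1:K) with hf
    have hfc := hinv f ?_
    · have hc00 : MvPolynomial.coeff 0 f = 0 := by
        simp [hf, MvPolynomial.coeff_monomial, hexpsne]
      rw [hc00, map_zero] at hfc
      rw [hf, MvPolynomial.monomial_eq_zero] at hfc
      exact one_ne_zero hfc
    · intro t x
      have h0 : ((∏ j, t j ^ ((0 : Fin r → ℤ) j) : Kˣ) : K) = 1 := by simp
      rw [h0, one_mul]
      rw [hf, MvPolynomial.eval_monomial, MvPolynomial.eval_monomial, one_mul, one_mul]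
      rw [Finsupp.prod_fintype _ _ (fun i => pow_zero _),
        Finsupp.prod_fintype _ _ (fun i => pow_zero _)]
      have key : (∏ i, (∏ j, t j ^ w i j : Kˣ) ^ (a i)) = (1:Kˣ) := by
        calc ∏ i, (∏ j, t j ^ w i j : Kˣ) ^ (a i)
            = ∏ i, ∏ j, t j ^ (w i j * (a i : ℤ)) := by
              refine Finset.prod_congr rfl fun i _ => ?_
              rw [← Finset.prod_pow]
              refine Finset.prod_congr rfl fun j _ => ?_
              rw [← zpow_natCast (t j ^ w i j), ← zpow_mul]
          _ = ∏ j, ∏ i, t j ^ (w i j * (a i : ℤ)) := Finset.prod_comm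
          _ = 1 := by
              refine Finset.prod_eq_one fun j _ => ?_
              rw [prod_zpow_sum]
              have hz : ∑ i, w i j * (a i : ℤ) = 0 := by
                rw [← hwa j]
                exact Finset.sum_congr rfl fun i _ => mul_comm _ _
              rw [hz, zpow_zero]
      have keyK : (∏ i, ((∏ j, t j ^ w i j : Kˣ) : K) ^ (a i)) = 1 := by
        calc ∏ i, ((∏ j, t j ^ w i j : Kˣ) : K) ^ (a i)
            = ((∏ i, (∏ j, t j ^ w i j : Kˣ) ^ (a i) : Kˣ) : K) := by
              norm_cast
          _ = 1 := by rw [key]; rfl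
      calc ∏ i, (((∏ j, t j ^ w i j : Kˣ) : K) * x i) ^ (exps i)
          = (∏ i, ((∏ j, t j ^ w i j : Kˣ) : K) ^ (a i)) * ∏ i, x i ^ (exps i) := by
            rw [← Finset.prod_mul_distrib]
            exact Finset.prod_congr rfl fun i _ => by rw [hexps i, mul_pow]
        _ = ∏ i, x i ^ (exps i) := by rw [keyK, one_mul]
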